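/- For even t ≥ 2 and d ≥ 3, there exists a tree G of maximum degree d with exactly τ_t(d) vertices such that every two distinct vertices of G are at distance at most t (i.e., G^t is a clique); consequently χ_t(G) = τ_t(d). -/

import Mathlib

open SimpleGraph

/-- A distance-`t` vertex-colouring with `n` colours. -/
def DistVertexColorable {V : Type*} (G : SimpleGraph V) (t n : ℕ) : Prop :=
  ∃ c : V → Fin n, ∀ u v : V, u ≠ v → G.edist u v ≤ (t : ℕ∞) → c u ≠ c v

/-- `τ_t(d)` for even `t`. -/
def taueven (t d : ℕ) : ℕ := (d * (d - 1) ^ (t / 2) - 2) / (d - 2)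


section Parent

variable {V : Type} (par : V → V) (dep : V → ℕ) (root : V)

/-- The graph where each vertex is joined to its parent. -/
def pGraph : SimpleGraph V := SimpleGraph.fromRel (fun u v => par u = v)

lemma pGraph_adj {u v : V} : (pGraph par).Adj u v ↔ u ≠ v ∧ (par u = v ∨ par v = u) := by
  simp [pGraph]

variable (hroot : par root = root) (hdep : ∀ v, v ≠ root → dep (par v) + 1 = dep v)

include hroot hdep

lemma dep_par_le (v : V) : dep (par v) ≤ dep v := by
  by_cases h : v = root
  · subst h; rw [hroot]
  · have := hdep v h; omega

lemma dep_iter (k : ℕ) (v : V) : dep (par^[k] v) ≤ dep v := by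
  induction k with
  | zero => simp
  | succ k ih =>
    rw [Function.iterate_succ_apply']
    exact (dep_par_le par dep root hroot hdep _).trans ih

lemma no_return {v : V} (hv : v ≠ root) (k : ℕ) : par^[k] (par v) ≠ v := by
  intro h
  have h1 : dep (par^[k] (par v)) ≤ dep (par v) := dep_iter par dep root hroot hdep k _
  have h2 := hdep v hv
  rw [h] at h1
  omega

lemma exists_walk (v : V) : ∃ w : (pGraph par).Walk v root, w.length ≤ dep v := by
  suffices H : ∀ (n : ℕ) (v : V), dep v ≤ n → ∃ w : (pGraph par).Walk v root, w.length ≤ dep v from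
    H (dep v) v le_rfl
  intro n
  induction n with
  | zero =>
    intro v hv
    by_cases h : v = root
    · subst h; exact ⟨Walk.nil, by simp⟩
    · have := hdep v h; omega
  | succ n ih =>
    intro v hn
    by_cases hv : v = root
    · subst hv; exact ⟨Walk.nil, by simp⟩
    · have hd := hdep v hv
      have hne : v ≠ par v := by
        intro h'; rw [← h'] at hd; omega
      have hadj : (pGraph par).Adj v (par v) := (pGraph_adj par).2 ⟨hne, Or.inl rfl⟩
      obtain ⟨w, hw⟩ := ih (par v) (by omega)
      exact ⟨Walk.cons hadj w, by simp only [Walk.length_cons]; omega⟩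

lemma walk_mem_edges {v : V} (hv : v ≠ root) :
    ∀ (u x : V) (w : (pGraph par).Walk u x), x = par v →
      (∃ k, par^[k] u = v) → s(v, par v) ∈ w.edges := by
  intro u x w
  induction w with
  | nil =>
    rintro rfl ⟨k, hk⟩
    exact absurd hk (no_return par dep root hroot hdep hv k)
  | @cons a b c h q ih =>
    rintro rfl ⟨k, hk⟩
    by_cases hb : ∃ k, par^[k] b = v
    · simp only [Walk.edges_cons, List.mem_cons]
      exact Or.inr (ih rfl hb)
    · obtain ⟨hne, hor⟩ := (pGraph_adj par).1 h
      rcases hor with hpu | hpb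
      · cases k with
        | zero =>
          simp only [Function.iterate_zero, id] at hk
          subst hk
          simp only [Walk.edges_cons, List.mem_cons]
          left; rw [hpu]
        | succ j =>
          exact absurd ⟨j, by rw [← hk, Function.iterate_succ_apply, hpu]⟩ hb
      · exact absurd ⟨k + 1, by rw [Function.iterate_succ_apply, hpb, hk]⟩ hb

lemma pGraph_isBridge {v : V} (hv : v ≠ root) :
    (pGraph par).IsBridge s(v, par v) := by
  rw [isBridge_iff_adj_and_forall_walk_mem_edges]
  have hd := hdep v hv
  have hne : v ≠ par v := by intro h'; rw [← h'] at hd; omega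
  refine fun w => ?_
  exact walk_mem_edges par dep root hroot hdep hv v _ w rfl ⟨0, rfl⟩

lemma pGraph_isTree : (pGraph par).IsTree := by
  constructor
  · have : Nonempty V := ⟨root⟩
    refine Connected.mk fun u v => ?_
    obtain ⟨w1, -⟩ := exists_walk par dep root hroot hdep u
    obtain ⟨w2, -⟩ := exists_walk par dep root hroot hdep v
    have r1 : (pGraph par).Reachable u root := ⟨w1⟩
    have r2 : (pGraph par).Reachable v root := ⟨w2⟩
    exact r1.trans r2.symm
  · rw [isAcyclic_iff_forall_adj_isBridge]
    intro u v h
    obtain ⟨hne, hor⟩ := (pGraph_adj par).1 h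
    rcases hor with hpu | hpv
    · have hu : u ≠ root := by
        intro h'; subst h'; rw [hroot] at hpu; exact hne hpu
      rw [← hpu]
      exact pGraph_isBridge par dep root hroot hdep hu
    · have hvr : v ≠ root := by
        intro h'; subst h'; rw [hroot] at hpv; exact hne hpv.symm
      rw [Sym2.eq_swap, ← hpv]
      exact pGraph_isBridge par dep root hroot hdep hvr

lemma pGraph_edist_le (u v : V) :
    (pGraph par).edist u v ≤ ((dep u + dep v : ℕ) : ℕ∞) := by
  obtain ⟨w1, h1⟩ := exists_walk par dep root hroot hdep u
  obtain ⟨w2, h2⟩ := exists_walk par dep root hroot hdep v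
  refine ((w1.append w2.reverse).edist_le).trans ?_
  rw [Nat.cast_le, Walk.length_append, Walk.length_reverse]
  omega

end Parent



def Wl (m r : ℕ) : Type := {l : List (Fin m) // l.length < r}

instance (m r : ℕ) : Finite (Wl m r) := (List.finite_length_lt (Fin m) r).to_subtype

def Vt (m r : ℕ) : Type := Option (Fin (m+1) × Wl m r)

noncomputable instance optFin (X : Type) [Finite X] : Finite (Option X) :=
  have := Fintype.ofFinite X
  inferInstance

instance (m r : ℕ) : Finite (Vt m r) := by unfold Vt; infer_instance

def parV {m r : ℕ} : Vt m r → Vt m r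
  | none => none
  | some (i, l) =>
    if h : l.val = [] then none
    else some (i, ⟨l.val.dropLast, by rw [List.length_dropLast]; have := l.prop; omega⟩)

def pG (m r : ℕ) : SimpleGraph (Vt m r) := SimpleGraph.fromRel (fun u v => parV u = v)

lemma pG_adj {m r : ℕ} {u v : Vt m r} : (pG m r).Adj u v ↔ u ≠ v ∧ (parV u = v ∨ parV v = u) := by
  simp [pG]

lemma parV_eq_some {m r : ℕ} {u : Vt m r} {i : Fin (m+1)} {l : Wl m r}
    (h : parV u = some (i, l)) :
    ∃ (j : Fin m) (hh : (l.val ++ [j]).length < r), u = some (i, ⟨l.val ++ [j], hh⟩) := by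
  rcases u with _ | ⟨i', l'⟩
  · simp [parV] at h
  · by_cases h0 : l'.val = []
    · simp [parV, h0] at h
    · rw [show parV (some (i', l')) = some (i', ⟨l'.val.dropLast, by rw [List.length_dropLast]; have := l'.prop; omega⟩) from dif_neg h0] at h
      replace h := Prod.mk.inj (Option.some.inj h)
      obtain ⟨rfl, rfl⟩ := h
      have hrec : l'.val.dropLast ++ [l'.val.getLast h0] = l'.val :=
        List.dropLast_append_getLast h0
      refine ⟨l'.val.getLast h0, ?_, ?_⟩
      · show (l'.val.dropLast ++ [l'.val.getLast h0]).length < r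
        rw [hrec]; exact l'.prop
      · exact congrArg some (congrArg _ (Subtype.ext hrec.symm))

/-- the index for injectivity into Fin (m+1) -/
def lastF {m r : ℕ} : Vt m r → Fin (m+1)
  | none => 0
  | some (_, l) => if h : l.val = [] then 0 else Fin.succ (l.val.getLast h)

lemma lastF_child {m r : ℕ} (i : Fin (m+1)) (l : List (Fin m)) (j : Fin m)
    (hh : (l ++ [j]).length < r) :
    lastF (some (i, ⟨l ++ [j], hh⟩) : Vt m r) = Fin.succ j := by
  have hne : l ++ [j] ≠ [] := by simp
  simp only [lastF, hne, dite_false]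
  congr 1
  exact List.getLast_append_singleton l

lemma nbhd_some_card_le {m r : ℕ} (i : Fin (m+1)) (l : Wl m r) :
    ((pG m r).neighborSet (some (i, l))).ncard ≤ m + 1 := by
  classical
  set v : Vt m r := some (i, l) with hv
  set childF : Fin m → Vt m r := fun j =>
    if hh : (l.val ++ [j]).length < r then some (i, ⟨l.val ++ [j], hh⟩) else none with hc
  have hsub : (pG m r).neighborSet v ⊆ insert (parV v) (Set.range childF) := by
    intro u hu
    have hadj : (pG m r).Adj v u := hu
    by_cases e : u = parV v
    · exact e ▸ Set.mem_insert _ _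
    · obtain ⟨-, hor⟩ := pG_adj.1 hadj
      have hpar : parV u = v := by
        rcases hor with h' | h'
        · exact absurd h'.symm e
        · exact h'
      obtain ⟨j, hh, rfl⟩ := parV_eq_some hpar
      refine Set.mem_insert_of_mem _ ⟨j, ?_⟩
      simp only [hc]
      exact dif_pos hh
  calc ((pG m r).neighborSet v).ncard
      ≤ (insert (parV v) (Set.range childF)).ncard :=
        Set.ncard_le_ncard hsub (Set.toFinite _)
    _ ≤ (Set.range childF).ncard + 1 := Set.ncard_insert_le _ _
    _ ≤ m + 1 := by
        have h1 : (Set.range childF).ncard ≤ Nat.card (Fin m) := by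
          rw [← Nat.card_coe_set_eq]
          exact Finite.card_range_le childF
        simpa using h1

lemma nbhd_none {m r : ℕ} (hr : 0 < r) :
    (pG m r).neighborSet none =
      Set.range (fun i : Fin (m+1) => (some (i, ⟨[], hr⟩) : Vt m r)) := by
  ext u
  erw [mem_neighborSet, Set.mem_range, pG_adj]
  constructor
  · rintro ⟨hne, hor⟩
    have hpar : parV u = none := by
      rcases hor with h' | h'
      · exact absurd h' hne
      · exact h'
    match u with
    | none => exact absurd rfl (Ne.symm hne)
    | some (i', l') =>
      by_cases h0 : l'.val = []
      · refine ⟨i', ?_⟩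
        congr 1
        exact congrArg _ (Subtype.ext h0.symm)
      · simp [parV, h0] at hpar
  · rintro ⟨i, rfl⟩
    refine ⟨by exact (Option.some_ne_none _).symm, Or.inr ?_⟩
    rfl

lemma nbhd_none_card {m r : ℕ} (hr : 0 < r) :
    ((pG m r).neighborSet (none : Vt m r)).ncard = m + 1 := by
  rw [nbhd_none hr]
  have hinj : Function.Injective (fun i : Fin (m+1) => (some (i, ⟨[], hr⟩) : Vt m r)) := by
    intro a b hab
    exact congrArg Prod.fst (Option.some.inj hab)
  erw [← Nat.card_coe_set_eq, Nat.card_range_of_injective hinj,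
    Nat.card_eq_fintype_card, Fintype.card_fin]

def depV {m r : ℕ} : Vt m r → ℕ
  | none => 0
  | some (_, l) => l.val.length + 1

lemma parV_root {m r : ℕ} : parV (none : Vt m r) = none := rfl

lemma depV_par {m r : ℕ} (v : Vt m r) (hv : v ≠ none) : depV (parV v) + 1 = depV v := by
  match v with
  | none => exact absurd rfl hv
  | some (i, l) =>
    by_cases h : l.val = []
    · simp [parV, depV, h]
    · have : l.val.length ≠ 0 := by simpa using h
      simp [parV, depV, h]
      omega

lemma depV_le {m r : ℕ} (v : Vt m r) : depV v ≤ r := by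
  rcases v with _ | ⟨i, l⟩
  · exact Nat.zero_le r
  · have := l.prop
    simp only [depV]
    omega

/-- cons decomposition -/
def eW (m r : ℕ) : Wl m (r+1) ≃ Option (Fin m × Wl m r) where
  toFun x := match x with
    | ⟨[], _⟩ => none
    | ⟨a :: l, h⟩ => some (a, ⟨l, by simpa using h⟩)
  invFun y := match y with
    | none => ⟨[], Nat.succ_pos r⟩
    | some (a, ⟨l, h⟩) => ⟨a :: l, by simpa using h⟩
  left_inv x := by
    obtain ⟨l, h⟩ := x
    cases l <;> rfl
  right_inv y := by
    rcases y with _ | ⟨a, l, h⟩ <;> rfl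

lemma cardW (m : ℕ) (hm : 1 ≤ m) : ∀ r, (m - 1) * Nat.card (Wl m r) + 1 = m ^ r := by
  intro r
  induction r with
  | zero =>
    have : IsEmpty (Wl m 0) := ⟨fun l => Nat.not_lt_zero _ l.prop⟩
    simp [Nat.card_of_isEmpty]
  | succ r ih =>
    have h1 : Nat.card (Wl m (r+1)) = m * Nat.card (Wl m r) + 1 := by
      rw [Nat.card_congr (eW m r), Finite.card_option, Nat.card_prod,
        Nat.card_eq_fintype_card (α := Fin m), Fintype.card_fin]
    obtain ⟨e, rfl⟩ : ∃ e, m = e + 1 := ⟨m - 1, by omega⟩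
    simp only [Nat.add_sub_cancel] at ih ⊢
    rw [h1, pow_succ, ← ih]
    ring

lemma cardV (m r : ℕ) : Nat.card (Vt m r) = (m + 1) * Nat.card (Wl m r) + 1 := by
  show Nat.card (Option (Fin (m+1) × Wl m r)) = _
  rw [Finite.card_option, Nat.card_prod, Nat.card_eq_fintype_card (α := Fin (m+1)),
    Fintype.card_fin]

/-- For even `t ≥ 2` and `d ≥ 3` there is a tree `G` of maximum degree `d` with
exactly `τ_t(d)` vertices such that any two distinct vertices are at distance at most `t`
(i.e. `G^t` is a clique); consequently `χ_t(G) = τ_t(d)`. -/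
theorem stmt_6 (t d : ℕ) (ht : Even t) (ht2 : 2 ≤ t) (hd : 3 ≤ d) :
    ∃ (V : Type) (_ : Finite V) (G : SimpleGraph V),
      G.IsTree ∧ (∀ v, (G.neighborSet v).ncard ≤ d) ∧ (∃ v, (G.neighborSet v).ncard = d) ∧
      Nat.card V = taueven t d ∧
      (∀ u v : V, u ≠ v → G.edist u v ≤ (t : ℕ∞)) ∧
      sInf {n | DistVertexColorable G t n} = taueven t d := by
  obtain ⟨r, rfl⟩ := ht
  have hr : 0 < r := by omega
  obtain ⟨m, rfl⟩ : ∃ m, d = m + 1 := ⟨d - 1, by omega⟩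
  have hm : 2 ≤ m := by omega
  -- the tree
  have htree : (pG m r).IsTree := pGraph_isTree parV depV none rfl depV_par
  -- degrees
  have hdegle : ∀ v : Vt m r, ((pG m r).neighborSet v).ncard ≤ m + 1 := by
    intro v
    rcases v with _ | ⟨i, l⟩
    · exact le_of_eq (nbhd_none_card hr)
    · exact nbhd_some_card_le i l
  -- cardinality
  have hdiv : (r + r) / 2 = r := by omega
  have hN : Nat.card (Vt m r) = (m + 1) * Nat.card (Wl m r) + 1 := cardV m r
  have hW : (m - 1) * Nat.card (Wl m r) + 1 = m ^ r := cardW m (by omega) r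
  have hkey : (m - 1) * Nat.card (Vt m r) + 2 = (m + 1) * m ^ r := by
    obtain ⟨e, rfl⟩ : ∃ e, m = e + 2 := ⟨m - 2, by omega⟩
    have h1 : e + 2 - 1 = e + 1 := by omega
    rw [h1] at hW ⊢
    rw [hN, ← hW]
    ring
  have hcard : taueven (r + r) (m + 1) = Nat.card (Vt m r) := by
    unfold taueven
    rw [hdiv, Nat.add_sub_cancel, show m + 1 - 2 = m - 1 by omega, ← hkey,
      Nat.add_sub_cancel, Nat.mul_div_cancel_left _ (by omega : 0 < m - 1)]
  -- distances
  have hedist : ∀ u v : Vt m r, (pG m r).edist u v ≤ ((r + r : ℕ) : ℕ∞) := by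
    intro u v
    refine (pGraph_edist_le parV depV none rfl depV_par u v).trans ?_
    have h1 := depV_le u
    have h2 := depV_le v
    exact Nat.cast_le.mpr (by omega)
  -- chromatic number
  have hmem : DistVertexColorable (pG m r) (r + r) (Nat.card (Vt m r)) := by
    refine ⟨fun v => Finite.equivFin (Vt m r) v, fun u v huv _ => ?_⟩
    exact fun h => huv ((Finite.equivFin (Vt m r)).injective h)
  have hinf : sInf {n | DistVertexColorable (pG m r) (r + r) n} = Nat.card (Vt m r) := by
    have hlb : ∀ n ∈ {n | DistVertexColorable (pG m r) (r + r) n}, Nat.card (Vt m r) ≤ n := by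
      rintro n ⟨c, hc⟩
      have hinj : Function.Injective c := by
        intro a b hab
        by_contra hne
        exact hc a b hne (hedist a b) hab
      have := Nat.card_le_card_of_injective c hinj
      simpa using this
    exact le_antisymm (Nat.sInf_le hmem) (le_csInf ⟨_, hmem⟩ hlb)
  exact ⟨Vt m r, inferInstance, pG m r, htree, hdegle, ⟨none, nbhd_none_card hr⟩,
    hcard.symm, fun u v _ => hedist u v, hinf.trans hcard.symm⟩
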